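/- Let G be a group in which every finitely generated subgroup has a root, and in which every finitely generated non-abelian subgroup H satisfies [N_G(H) : H] < ∞. Then for every finitely generated non-abelian subgroup H of G, the normalizer tower N⁰ = H, N^{α+1} = N_G(N^α) stabilizes after finitely many steps. -/

import Mathlib

/-- A subgroup of a commutative subgroup is commutative. -/
lemma isCommutative_of_le' {G : Type*} [Group G] {H K : Subgroup G} (hHK : H ≤ K)
    (hK : IsMulCommutative K) : IsMulCommutative H := by
  haveI := hK
  exact ⟨⟨fun a b => Subtype.ext (Subgroup.mul_comm_of_mem_isMulCommutative (H := K)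
    (hHK a.2) (hHK b.2))⟩⟩

/-- A finite-index overgroup of a finitely generated subgroup is finitely generated. -/
lemma fg_of_relindex_ne_zero' {G : Type*} [Group G] {H K : Subgroup G} (hHK : H ≤ K)
    (hfg : H.FG) (hrel : H.relIndex K ≠ 0) : K.FG := by
  obtain ⟨S, hS⟩ := hfg
  haveI : Finite (K ⧸ H.subgroupOf K) := Nat.finite_of_card_ne_zero hrel
  haveI : Finite (Set.range (fun q : K ⧸ H.subgroupOf K => ((Quotient.out q : K) : G))) :=
    Set.finite_range _
  rw [Subgroup.fg_iff]
  refine ⟨(S : Set G) ∪ Set.range (fun q : K ⧸ H.subgroupOf K => ((Quotient.out q : K) : G)),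
    le_antisymm ?_ ?_, (Finset.finite_toSet S).union (Set.finite_range _)⟩
  · rw [Subgroup.closure_le]
    rintro x (hx | ⟨q, rfl⟩)
    · exact hHK (hS ▸ Subgroup.subset_closure hx)
    · exact (Quotient.out q).2
  · intro k hk
    set H' := H.subgroupOf K
    set t : K := Quotient.out (QuotientGroup.mk (s := H') ⟨k, hk⟩)
    have ht : QuotientGroup.mk (s := H') t = QuotientGroup.mk (s := H') ⟨k, hk⟩ :=
      Quotient.out_eq _
    have hmem : (t : G)⁻¹ * k ∈ H := by
      have := (QuotientGroup.eq (s := H')).mp ht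
      simpa [H', Subgroup.mem_subgroupOf] using this
    have h1 : (t : G) ∈ Subgroup.closure ((S : Set G) ∪
        Set.range (fun q : K ⧸ H' => ((Quotient.out q : K) : G))) :=
      Subgroup.subset_closure (Or.inr ⟨_, rfl⟩)
    have h2 : (t : G)⁻¹ * k ∈ Subgroup.closure ((S : Set G) ∪
        Set.range (fun q : K ⧸ H' => ((Quotient.out q : K) : G))) := by
      have : H ≤ Subgroup.closure ((S : Set G) ∪
          Set.range (fun q : K ⧸ H' => ((Quotient.out q : K) : G))) := by
        rw [← hS]
        exact Subgroup.closure_mono Set.subset_union_left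
      exact this hmem
    have := mul_mem h1 h2
    simpa using this

/-- If in `G` every finitely generated subgroup has a root and every finitely generated
non-abelian subgroup has finite index in its normalizer, then the normalizer tower of any
finitely generated non-abelian subgroup stabilizes after finitely many steps. -/
theorem normalizer_tower_stabilizes {G : Type*} [Group G]
    (hroot : ∀ H : Subgroup G, H.FG → ∃ R : Subgroup G,
      (H ≤ R ∧ H.relIndex R ≠ 0) ∧
      ∀ K : Subgroup G, H ≤ K → H.relIndex K ≠ 0 → K ≤ R)
    (hnorm : ∀ H : Subgroup G, H.FG → ¬IsMulCommutative H →
      H.relIndex (Subgroup.normalizer (H : Set G)) ≠ 0)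
    (H : Subgroup G) (hH : H.FG) (hna : ¬IsMulCommutative H) :
    ∃ n : ℕ, ∀ m : ℕ, n ≤ m →
      (fun K : Subgroup G => Subgroup.normalizer (K : Set G))^[m] H =
        (fun K : Subgroup G => Subgroup.normalizer (K : Set G))^[n] H := by
  obtain ⟨R, ⟨hHR, hHRrel⟩, hRmax⟩ := hroot H hH
  set T : ℕ → Subgroup G := fun m => (fun K : Subgroup G => Subgroup.normalizer (K : Set G))^[m] H with hT
  -- basic facts about the tower, by induction
  have key : ∀ m, H ≤ T m ∧ H.relIndex (T m) ≠ 0 := by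
    intro m
    induction m with
    | zero => exact ⟨le_rfl, by simp [hT, Subgroup.relIndex_self]⟩
    | succ m ih =>
      obtain ⟨hle, hrel⟩ := ih
      have hTfg : (T m).FG := fg_of_relindex_ne_zero' hle hH hrel
      have hTna : ¬IsMulCommutative (T m) := fun hc => hna (isCommutative_of_le' hle hc)
      have hstep : (T m).relIndex (Subgroup.normalizer (T m : Set G)) ≠ 0 := hnorm (T m) hTfg hTna
      have hsucc : T (m + 1) = (Subgroup.normalizer (T m : Set G)) := by
        simp [hT, Function.iterate_succ_apply']
      constructor
      · rw [hsucc]; exact hle.trans (Subgroup.le_normalizer)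
      · rw [hsucc, ← Subgroup.relIndex_mul_relIndex (H := H) (K := T m)
          (L := Subgroup.normalizer (T m : Set G)) hle Subgroup.le_normalizer]
        exact mul_ne_zero hrel hstep
  have hTle : ∀ m, T m ≤ T (m + 1) := by
    intro m
    have hsucc : T (m + 1) = (Subgroup.normalizer (T m : Set G)) := by
      simp [hT, Function.iterate_succ_apply']
    rw [hsucc]; exact Subgroup.le_normalizer
  have hTR : ∀ m, T m ≤ R := fun m => hRmax (T m) (key m).1 (key m).2
  -- the sequence of relative indices
  set a : ℕ → ℕ := fun m => H.relIndex (T m) with ha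
  have hdvd : ∀ m, a m * (T m).relIndex (T (m + 1)) = a (m + 1) := fun m =>
    Subgroup.relIndex_mul_relIndex H (T m) (T (m + 1)) (key m).1 (hTle m)
  have hbound : ∀ m, a m ≤ H.relIndex R := by
    intro m
    have := Subgroup.relIndex_mul_relIndex H (T m) R (key m).1 (hTR m)
    calc a m ≤ a m * (T m).relIndex R := Nat.le_mul_of_pos_right _ (Nat.pos_of_ne_zero (by
            intro h0
            apply hHRrel
            rw [← this, h0, mul_zero]))
      _ = H.relIndex R := this
  -- find a step where the index stops growing
  have hexists : ∃ n, ¬ a n < a (n + 1) := by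
    by_contra hcon
    push_neg at hcon
    have hsm : StrictMono a := strictMono_nat_of_lt_succ hcon
    have h1 := hbound (H.relIndex R + 1)
    have h2 : H.relIndex R + 1 ≤ a (H.relIndex R + 1) := hsm.le_apply
    omega
  obtain ⟨n, hn⟩ := hexists
  have hc : (T n).relIndex (T (n + 1)) ≠ 0 := by
    intro h0
    have h := hdvd n
    rw [h0, mul_zero] at h
    exact (key (n + 1)).2 h.symm
  have haeq : a n = a (n + 1) := by
    have h1 : a n ≤ a n * ((T n).relIndex (T (n + 1))) :=
      Nat.le_mul_of_pos_right _ (Nat.pos_of_ne_zero hc)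
    have h2 := hdvd n
    omega
  -- conclude T n = T (n+1)
  have hrel1 : (T n).relIndex (T (n + 1)) = 1 := by
    have h := hdvd n
    rw [← haeq] at h
    exact mul_left_cancel₀ (key n).2 (h.trans (mul_one (a n)).symm)
  have hfix : T (n + 1) = T n :=
    le_antisymm (Subgroup.relIndex_eq_one.mp hrel1) (hTle n)
  refine ⟨n, fun m hm => ?_⟩
  induction m with
  | zero =>
    have : n = 0 := by omega
    subst this; rfl
  | succ m ih =>
    rcases Nat.lt_or_ge n (m + 1) with h | h
    · have hm' : n ≤ m := by omega
      have heq : T m = T n := ih (by omega)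
      show T (m + 1) = T n
      calc T (m + 1) = (Subgroup.normalizer (T m : Set G)) := by
            simp [hT, Function.iterate_succ_apply']
        _ = (Subgroup.normalizer (T n : Set G)) := by rw [heq]
        _ = T (n + 1) := by simp [hT, Function.iterate_succ_apply']
        _ = T n := hfix
    · have : n = m + 1 := by omega
      subst this; rfl
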